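/- Let q be a prime power, m ≥ 2, and let A ⊆ {1,...,m} be a nonempty proper subset with Δ_A = {v ∈ F_q^m : supp(v) ⊆ A}. If q ≥ 3, or if q = 2 and |{1,...,m} \ A| ≥ 2, then for every v ∈ F_q^m \ Δ_A there exist linearly independent vectors e, f ∈ F_q^m \ Δ_A with v = e + f. -/

import Mathlib

theorem stmt15 (q m : ℕ) (hq : IsPrimePow q) (hm : 2 ≤ m)
    (F : Type) [Field F] [Fintype F] (hF : Fintype.card F = q)
    (A : Finset (Fin m)) (hA : A.Nonempty) (hA' : A ≠ Finset.univ)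
    (hcase : 3 ≤ q ∨ (q = 2 ∧ 2 ≤ Aᶜ.card))
    (v : Fin m → F) (hv : ¬ ∀ i, v i ≠ 0 → i ∈ A) :
    ∃ e f : Fin m → F,
      (¬ ∀ i, e i ≠ 0 → i ∈ A) ∧ (¬ ∀ i, f i ≠ 0 → i ∈ A) ∧
      v = e + f ∧ LinearIndependent F ![e, f] := by
  classical
  push_neg at hv
  obtain ⟨j, hvj, hjA⟩ := hv
  by_cases hk : ∃ k, k ∉ A ∧ k ≠ j
  · -- Case 1: another coordinate k outside A
    obtain ⟨k, hkA, hkj⟩ := hk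
    refine ⟨v - Pi.single k 1, Pi.single k 1, ?_, ?_, by ring, ?_⟩
    · push_neg
      exact ⟨j, by simpa [Pi.single_eq_of_ne' hkj] using hvj, hjA⟩
    · push_neg
      exact ⟨k, by simp, hkA⟩
    · rw [linearIndependent_fin2]
      constructor
      · simp [Matrix.cons_val_one, Matrix.head_cons]
      · intro a h
        simp only [Matrix.cons_val_one, Matrix.head_cons, Matrix.cons_val_zero] at h
        have := congrFun h j
        simp [Pi.single_eq_of_ne' hkj] at this
        exact hvj this.symm
  · -- Case 2: Aᶜ = {j}, so q ≥ 3
    push_neg at hk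
    have hAc : Aᶜ ⊆ {j} := by
      intro x hx
      simp only [Finset.mem_compl] at hx
      simp [hk x hx]
    have hq3 : 3 ≤ q := by
      rcases hcase with h | ⟨h2, hcard⟩
      · exact h
      · exfalso
        have := Finset.card_le_card hAc
        simp at this; omega
    -- find c ≠ 0, c ≠ v j
    have hc : ∃ c : F, c ≠ 0 ∧ c ≠ v j := by
      have h2 : ({0, v j} : Finset F).card ≤ 2 := by
        apply (Finset.card_insert_le _ _).trans; simp
      have : (({0, v j} : Finset F)ᶜ).Nonempty := by
        rw [← Finset.card_pos, Finset.card_compl, hF]; omega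
      obtain ⟨c, hc⟩ := this
      simp only [Finset.mem_compl, Finset.mem_insert, Finset.mem_singleton, not_or] at hc
      exact ⟨c, hc.1, hc.2⟩
    obtain ⟨c, hc0, hcv⟩ := hc
    by_cases hi : ∃ i, i ≠ j ∧ v i ≠ 0
    · -- v nonzero somewhere else
      obtain ⟨i, hij, hvi⟩ := hi
      refine ⟨v - Pi.single j c, Pi.single j c, ?_, ?_, by ring, ?_⟩
      · push_neg
        refine ⟨j, by simpa using sub_ne_zero.mpr (Ne.symm hcv), hjA⟩
      · push_neg
        exact ⟨j, by simpa using hc0, hjA⟩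
      · rw [linearIndependent_fin2]
        constructor
        · simp [Matrix.cons_val_one, Matrix.head_cons]
          intro h
          exact hc0 h
        · intro a h
          simp only [Matrix.cons_val_one, Matrix.head_cons, Matrix.cons_val_zero] at h
          have := congrFun h i
          simp [Pi.single_eq_of_ne hij] at this
          exact hvi this.symm
    · -- v supported only at j
      push_neg at hi
      obtain ⟨a, haA⟩ := hA
      have haj : a ≠ j := fun h => hjA (h ▸ haA)
      have hva : v a = 0 := hi a haj
      refine ⟨v - (Pi.single j c + Pi.single a 1), Pi.single j c + Pi.single a 1, ?_, ?_, by ring, ?_⟩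
      · push_neg
        refine ⟨j, ?_, hjA⟩
        simpa [Pi.single_eq_of_ne' haj] using sub_ne_zero.mpr (Ne.symm hcv)
      · push_neg
        refine ⟨j, ?_, hjA⟩
        simpa [Pi.single_eq_of_ne' haj] using hc0
      · rw [linearIndependent_fin2]
        constructor
        · simp [Matrix.cons_val_one, Matrix.head_cons]
          intro h
          have := congrFun h a
          simp [Pi.single_eq_of_ne haj] at this
        · intro s h
          simp only [Matrix.cons_val_one, Matrix.head_cons, Matrix.cons_val_zero] at h
          have ha := congrFun h a
          have hj := congrFun h j
          simp [Pi.single_eq_of_ne haj, Pi.single_eq_of_ne' haj, hva] at ha hj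
          -- ha : s = -1 (from s * 1 = 0 - 1), hj : s * c = v j - c
          rw [ha] at hj
          have : v j = 0 := by linear_combination -hj
          exact hvj this
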